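/- For all i ≥ 3, the number of distinct nonempty palindromic factors of W_i equals ⌊5i/2⌋ - 2. -/
import Mathlib

/-- The morphism `phi` on the alphabet `ℕ`: `phi (2i) = (2i)(2i+1)` and `phi (2i+1) = (2i+2)`. -/
def phi (a : ℕ) : List ℕ := if a % 2 = 0 then [a, a + 1] else [a + 1]

/-- The finite ZWW words: `W n = phi^n(0)`, so `W 0 = 0`, `W 1 = 01`, `W 2 = 012`, `W 3 = 01223`. -/
def W (n : ℕ) : List ℕ := (fun w => w.flatMap phi)^[n] [0]

lemma W_succ (n : ℕ) : W (n+1) = (W n).flatMap phi := by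
  simp [W, Function.iterate_succ_apply']

lemma phi_add_two (a : ℕ) : phi (a+2) = (phi a).map (· + 2) := by
  rcases Nat.even_or_odd a with h | h
  · have : a % 2 = 0 := Nat.even_iff.mp h
    simp [phi, this, Nat.add_mod_right]
  · have : a % 2 = 1 := Nat.odd_iff.mp h
    simp [phi, this, Nat.add_mod_right]

lemma flatMap_map_two (w : List ℕ) :
    (w.map (· + 2)).flatMap phi = (w.flatMap phi).map (· + 2) := by
  induction w with
  | nil => simp
  | cons a w ih => simp [List.flatMap_cons, ih, phi_add_two]

lemma W_add_two (n : ℕ) : W (n+2) = W (n+1) ++ (W n).map (· + 2) := by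
  induction n with
  | zero => decide
  | succ n ih =>
    rw [show n+1+2 = (n+2)+1 by ring, W_succ, ih, List.flatMap_append,
      flatMap_map_two, ← W_succ, ← W_succ, show n+1+1 = n+2 by ring, ih]

lemma W_prefix_succ (n : ℕ) : W n <+: W (n+1) := by
  cases n with
  | zero => exact ⟨[1], rfl⟩
  | succ n => rw [W_add_two]; exact List.prefix_append _ _

lemma W_prefix {m n : ℕ} (h : m ≤ n) : W m <+: W n := by
  induction n with
  | zero => simp_all
  | succ n ih =>
    rcases Nat.lt_or_ge m (n+1) with h' | h'
    · exact (ih (by omega)).trans (W_prefix_succ n)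
    · have : m = n + 1 := by omega
      subst this; rfl

lemma mem_W_le {a n : ℕ} (h : a ∈ W n) : a ≤ n := by
  induction n generalizing a with
  | zero => simp [W] at h; omega
  | succ n ih =>
    rw [W_succ, List.mem_flatMap] at h
    obtain ⟨b, hb, ha⟩ := h
    have := ih hb
    by_cases hb2 : b % 2 = 0 <;> simp [phi, hb2] at ha <;> omega

lemma W_last (n : ℕ) : ∃ v, W n = v ++ [n] ∧ ∀ x ∈ v, x < n := by
  induction n using Nat.strong_induction_on with
  | _ n ih =>
    match n with
    | 0 => exact ⟨[], rfl, by simp⟩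
    | 1 => exact ⟨[0], rfl, by simp⟩
    | (m+2) =>
      obtain ⟨v, hv, hvlt⟩ := ih m (by omega)
      refine ⟨W (m+1) ++ v.map (· + 2), ?_, ?_⟩
      · rw [W_add_two, hv]; simp
      · intro x hx
        rcases List.mem_append.mp hx with h | h
        · have := mem_W_le h; omega
        · obtain ⟨y, hy, rfl⟩ := List.mem_map.mp h
          have := hvlt y hy; omega

lemma mem_W {j n : ℕ} (h : j ≤ n) : j ∈ W n := by
  obtain ⟨v, hv, -⟩ := W_last j
  have h1 : j ∈ W j := by rw [hv]; simp
  exact (W_prefix h).subset h1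

lemma W_tail3 {m : ℕ} (h : 2 ≤ m) : ∃ v x, W m = v ++ [x, m-1, m] ∧ x ≤ m - 1 := by
  induction m using Nat.strong_induction_on with
  | _ m ih =>
    match m with
    | 2 => exact ⟨[], 0, rfl, by omega⟩
    | 3 => exact ⟨[0,1], 2, rfl, by omega⟩
    | (m+4) =>
      obtain ⟨v, x, hv, hx⟩ := ih (m+2) (by omega) (by omega)
      refine ⟨W (m+3) ++ v.map (· + 2), x + 2, ?_, by omega⟩
      rw [W_add_two, hv]
      simp [show m+2-1 = m+1 by omega, show m+4-1 = m+3 by omega]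

lemma W_head3 {n : ℕ} (h : 2 ≤ n) : ∃ v, W n = [0,1,2] ++ v := by
  obtain ⟨v, hv⟩ := W_prefix h
  exact ⟨v, hv.symm⟩

lemma W_length_ge {n : ℕ} (h : 2 ≤ n) : 3 ≤ (W n).length := by
  obtain ⟨v, hv⟩ := W_head3 h
  rw [hv]; simp

def Good (w : List ℕ) : Prop := ∀ k a b, w[k]? = some a → w[k+1]? = some b →
  (b = a + 1 ∨ (b % 2 = 0 ∧ 2 ≤ b ∧ b ≤ a)) ∧
  ∀ c, w[k+2]? = some c →
    ((b ≤ a → c = b + 1) ∧ (c ≤ b → b = a + 1) ∧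
     ∀ d, w[k+3]? = some d → b < a → d = c + 1)

lemma good_infix {u w : List ℕ} (hg : Good w) (h : u <:+: w) : Good u := by
  obtain ⟨s, t, hst⟩ := h
  intro k a b ha hb
  have key : ∀ j x, u[j]? = some x → w[s.length + j]? = some x := by
    intro j x hx
    have hj : j < u.length := (List.getElem?_eq_some_iff.mp hx).1
    rw [← hst, List.append_assoc, List.getElem?_append_right (by omega),
      Nat.add_sub_cancel_left, List.getElem?_append_left hj]
    exact hx
  have h1 := hg (s.length + k) a b (key k a ha) (key (k+1) b hb)
  refine ⟨h1.1, fun c hc => ?_⟩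
  have h2 := h1.2 c (key (k+2) c hc)
  exact ⟨h2.1, h2.2.1, fun d hd hba => h2.2.2 d (key (k+3) d hd) hba⟩

lemma good_map2 {w : List ℕ} (hg : Good w) : Good (w.map (· + 2)) := by
  intro k a b ha hb
  simp only [List.getElem?_map] at ha hb
  obtain ⟨a', ha', rfl⟩ := Option.map_eq_some_iff.mp ha
  obtain ⟨b', hb', rfl⟩ := Option.map_eq_some_iff.mp hb
  have h1 := hg k a' b' ha' hb'
  constructor
  · rcases h1.1 with h | h
    · left; omega
    · right; omega
  · intro c hc
    simp only [List.getElem?_map] at hc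
    obtain ⟨c', hc', rfl⟩ := Option.map_eq_some_iff.mp hc
    have h2 := h1.2 c' hc'
    refine ⟨fun h => by have := h2.1 (by omega); omega,
      fun h => by have := h2.2.1 (by omega); omega, ?_⟩
    intro d hd hba
    simp only [List.getElem?_map] at hd
    obtain ⟨d', hd', rfl⟩ := Option.map_eq_some_iff.mp hd
    have := h2.2.2 d' hd' (by omega); omega

lemma good_concrete {w : List ℕ} (hlen : w.length ≤ 5)
    (hW : ∀ k, (h : k + 1 < w.length) →
      (w[k+1] = w[k] + 1 ∨ (w[k+1] % 2 = 0 ∧ 2 ≤ w[k+1] ∧ w[k+1] ≤ w[k])) ∧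
      ∀ (h2 : k + 2 < w.length),
        ((w[k+1] ≤ w[k] → w[k+2] = w[k+1] + 1) ∧ (w[k+2] ≤ w[k+1] → w[k+1] = w[k] + 1) ∧
         ∀ (h3 : k + 3 < w.length), w[k+1] < w[k] → w[k+3] = w[k+2] + 1)) :
    Good w := by
  intro k a b ha hb
  obtain ⟨hk1, ha⟩ := List.getElem?_eq_some_iff.mp ha
  obtain ⟨hk2, hb⟩ := List.getElem?_eq_some_iff.mp hb
  subst ha hb
  have h1 := hW k hk2
  refine ⟨h1.1, fun c hc => ?_⟩
  obtain ⟨hk3, hc⟩ := List.getElem?_eq_some_iff.mp hc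
  subst hc
  have h2 := h1.2 hk3
  refine ⟨h2.1, h2.2.1, fun d hd hba => ?_⟩
  obtain ⟨hk4, hd⟩ := List.getElem?_eq_some_iff.mp hd
  subst hd
  exact h2.2.2 hk4 hba

lemma good_W2 : Good (W 2) := by
  have h : W 2 = [0,1,2] := rfl
  rw [h]
  apply good_concrete (by decide)
  intro k h1
  have hk : k < 2 := by simp at h1; omega
  interval_cases k <;>
    refine ⟨?_, fun h2 => ⟨?_, ?_, fun h3 hba => ?_⟩⟩ <;>
    simp_all <;> omega

lemma good_W3 : Good (W 3) := by
  have h : W 3 = [0,1,2,2,3] := rfl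
  rw [h]
  apply good_concrete (by decide)
  intro k h1
  have hk : k < 4 := by simp at h1; omega
  interval_cases k <;>
    refine ⟨?_, fun h2 => ⟨?_, ?_, fun h3 hba => ?_⟩⟩ <;>
    simp_all <;> omega

lemma getElem?_append_pos {s t : List ℕ} {k : ℕ} (h : k < s.length) :
    (s ++ t)[k]? = s[k]? := List.getElem?_append_left h

lemma good_append {s t : List ℕ} (hs : Good s) (ht : Good t)
    (ht0 : t[0]? = some 2) (ht1 : t[1]? = some 3) (ht2 : t[2]? = some 4)
    (htail : ∃ v x y, s = v ++ [x, y, y + 1] ∧ x ≤ y ∧ 2 ≤ y) :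
    Good (s ++ t) := by
  obtain ⟨v, x, y, hsv, hxy, hy2⟩ := htail
  have hL : s.length = v.length + 3 := by rw [hsv]; simp
  set L := s.length with hLdef
  -- values of the last three letters of s
  have hs3 : s[L-3]? = some x := by
    rw [hsv, List.getElem?_append_right (by omega)]
    have : L - 3 - v.length = 0 := by omega
    rw [this]; rfl
  have hs2 : s[L-2]? = some y := by
    rw [hsv, List.getElem?_append_right (by omega)]
    have : L - 2 - v.length = 1 := by omega
    rw [this]; rfl
  have hs1 : s[L-1]? = some (y+1) := by
    rw [hsv, List.getElem?_append_right (by omega)]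
    have : L - 1 - v.length = 2 := by omega
    rw [this]; rfl
  intro k a b ha hb
  by_cases hk : L ≤ k
  · -- everything in t
    have key : ∀ j z, (s ++ t)[j]? = some z → L ≤ j → t[j - L]? = some z := by
      intro j z hz hj
      rwa [List.getElem?_append_right hj] at hz
    have h1 := ht (k - L) a b (key k a ha hk)
      (by have := key (k+1) b hb (by omega); rwa [show k+1-L = k-L+1 by omega] at this)
    refine ⟨h1.1, fun c hc => ?_⟩
    have h2 := h1.2 c
      (by have := key (k+2) c hc (by omega); rwa [show k+2-L = k-L+2 by omega] at this)
    refine ⟨h2.1, h2.2.1, fun d hd hba => ?_⟩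
    exact h2.2.2 d
      (by have := key (k+3) d hd (by omega); rwa [show k+3-L = k-L+3 by omega] at this) hba
  · push_neg at hk  -- k < L
    have hka : s[k]? = some a := by rwa [getElem?_append_pos hk] at ha
    by_cases hk1 : k + 1 < L
    · have hkb : s[k+1]? = some b := by rwa [getElem?_append_pos hk1] at hb
      have h1 := hs k a b hka hkb
      refine ⟨h1.1, fun c hc => ?_⟩
      by_cases hk2 : k + 2 < L
      · have hkc : s[k+2]? = some c := by rwa [getElem?_append_pos hk2] at hc
        have h2 := h1.2 c hkc
        refine ⟨h2.1, h2.2.1, fun d hd hba => ?_⟩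
        by_cases hk3 : k + 3 < L
        · have hkd : s[k+3]? = some d := by rwa [getElem?_append_pos hk3] at hd
          exact h2.2.2 d hkd hba
        · -- k + 3 = L : a = s[L-3] = x, b = s[L-2] = y, but b < a contradicts x ≤ y
          have e3 : k = L - 3 := by omega
          have : a = x := by
            rw [e3] at hka; rw [hka] at hs3; exact (Option.some_inj.mp hs3)
          have : b = y := by
            rw [show k+1 = L-2 by omega] at hkb; rw [hkb] at hs2
            exact (Option.some_inj.mp hs2)
          omega
      · -- k + 2 = L : c = t[0] = 2, a = s[L-2] = y, b = s[L-1] = y+1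
        have hc2 : c = 2 := by
          rw [List.getElem?_append_right (by omega : L ≤ k + 2),
            show k+2-L = 0 by omega, ht0] at hc
          exact (Option.some_inj.mp hc).symm
        have hay : a = y := by
          rw [show k = L-2 by omega] at hka; rw [hka] at hs2
          exact (Option.some_inj.mp hs2)
        have hby : b = y + 1 := by
          rw [show k+1 = L-1 by omega] at hkb; rw [hkb] at hs1
          exact (Option.some_inj.mp hs1)
        refine ⟨fun h => by omega, fun h => by omega, fun d hd hba => by omega⟩
    · -- k + 1 = L : a = s[L-1] = y+1, b = t[0] = 2, c = 3, d = 4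
      have hay : a = y + 1 := by
        rw [show k = L-1 by omega] at hka; rw [hka] at hs1
        exact (Option.some_inj.mp hs1)
      have hb2 : b = 2 := by
        rw [List.getElem?_append_right (by omega : L ≤ k + 1),
          show k+1-L = 0 by omega, ht0] at hb
        exact (Option.some_inj.mp hb).symm
      refine ⟨by right; omega, fun c hc => ?_⟩
      have hc3 : c = 3 := by
        rw [List.getElem?_append_right (by omega : L ≤ k + 2),
          show k+2-L = 1 by omega, ht1] at hc
        exact (Option.some_inj.mp hc).symm
      refine ⟨fun h => by omega, fun h => by omega, fun d hd hba => ?_⟩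
      have hd4 : d = 4 := by
        rw [List.getElem?_append_right (by omega : L ≤ k + 3),
          show k+3-L = 2 by omega, ht2] at hd
        exact (Option.some_inj.mp hd).symm
      omega

lemma good_W : ∀ n, Good (W n) := by
  intro n
  induction n using Nat.strong_induction_on with
  | _ n ih =>
    match n with
    | 0 => intro k a b ha hb; rw [show W 0 = [0] from rfl] at hb
           have := (List.getElem?_eq_some_iff.mp hb).1; simp at this
    | 1 => intro k a b ha hb
           rw [show W 1 = [0,1] from rfl] at ha hb
           have hk : k + 1 < 2 := by simpa using (List.getElem?_eq_some_iff.mp hb).1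
           have hk0 : k = 0 := by omega
           subst hk0
           simp at ha hb
           refine ⟨by omega, fun c hc => ?_⟩
           rw [show W 1 = [0,1] from rfl] at hc
           have := (List.getElem?_eq_some_iff.mp hc).1; simp at this
    | 2 => exact good_W2
    | 3 => exact good_W3
    | (m+4) =>
      rw [show m+4 = (m+2)+2 by ring, W_add_two]
      obtain ⟨v, hv⟩ := W_head3 (show 2 ≤ m + 2 by omega)
      have hmap : (W (m+2)).map (· + 2) = [2,3,4] ++ v.map (· + 2) := by
        rw [hv]; simp
      apply good_append (ih (m+3) (by omega)) (good_map2 (ih (m+2) (by omega)))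
      · rw [hmap]; rfl
      · rw [hmap]; rfl
      · rw [hmap]; simp
      · obtain ⟨v', x, hv', hx⟩ := W_tail3 (show 2 ≤ m + 3 by omega)
        refine ⟨v', x, m + 2, ?_, by omega, by omega⟩
        rw [hv']; norm_num

lemma no_long_pal {u : List ℕ} (hg : Good u) (hp : u.reverse = u) (hl : 4 ≤ u.length) :
    False := by
  set L := u.length with hLdef
  have pal : ∀ i, (h : i < L) → u[i]? = u[L-1-i]? := by
    intro i h
    have hr : i < u.reverse.length := by simpa using h
    calc u[i]? = u.reverse[i]? := by rw [hp]
      _ = some (u.reverse[i]'hr) := List.getElem?_eq_getElem hr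
      _ = some (u[L-1-i]'(by omega)) := by rw [List.getElem_reverse]
      _ = u[L-1-i]? := (List.getElem?_eq_getElem (by omega)).symm
  have g : ∀ j, (h : j < L) → ∃ x, u[j]? = some x :=
    fun j h => ⟨u[j], List.getElem?_eq_getElem h⟩
  obtain ⟨a, q0⟩ := g 0 (by omega)
  obtain ⟨b, q1⟩ := g 1 (by omega)
  obtain ⟨c, q2⟩ := g 2 (by omega)
  obtain ⟨e, q3⟩ := g 3 (by omega)
  have qL1 : u[L-1]? = some a := by
    have := pal 0 (by omega); rw [show L-1-0 = L-1 by omega] at this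
    rw [← this]; exact q0
  have qL2 : u[L-2]? = some b := by
    have := pal 1 (by omega); rw [show L-1-1 = L-2 by omega] at this
    rw [← this]; exact q1
  have qL3 : u[L-3]? = some c := by
    have := pal 2 (by omega); rw [show L-1-2 = L-3 by omega] at this
    rw [← this]; exact q2
  have qL4 : u[L-4]? = some e := by
    have := pal 3 (by omega); rw [show L-1-3 = L-4 by omega] at this
    rw [← this]; exact q3
  -- shifted forms
  have m2 : u[(L-3)+1]? = some b := by rw [show L-3+1 = L-2 by omega]; exact qL2
  have m3 : u[(L-3)+2]? = some a := by rw [show L-3+2 = L-1 by omega]; exact qL1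
  have n1 : u[(L-4)+1]? = some c := by rw [show L-4+1 = L-3 by omega]; exact qL3
  have n2 : u[(L-4)+2]? = some b := by rw [show L-4+2 = L-2 by omega]; exact qL2
  have n3 : u[(L-4)+3]? = some a := by rw [show L-4+3 = L-1 by omega]; exact qL1
  have W0 := hg 0 a b q0 q1
  have T0 := W0.2 c q2
  have Wm3 := hg (L-3) c b qL3 m2
  have Tm3 := Wm3.2 a m3
  have Wm4 := hg (L-4) e c qL4 n1
  have Tm4 := Wm4.2 b n2
  by_cases hL4 : L = 4
  · -- then index 1 = L - 3, so b = c
    have : u[1]? = some c := by rw [show (1:ℕ) = L - 3 by omega]; exact qL3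
    have hbc : b = c := by rw [q1] at this; exact Option.some_inj.mp this
    rcases W0.1 with h | h
    · -- b = a + 1 ; Tm3: a ≤ b → b = c + 1 gives c = a, then b = c contradiction
      have hca : b = c + 1 := Tm3.2.1 (by omega)
      omega
    · -- b ≤ a : T0.1: c = b + 1, contradiction with b = c
      have := T0.1 (by omega)
      omega
  · have hL5 : 5 ≤ L := by omega
    by_cases hba : b ≤ a
    · have hc : c = b + 1 := T0.1 hba
      have hab : a = b + 1 := Tm3.1 (by omega)
      have he : e = c + 1 := T0.2.2 e q3 (by omega)
      by_cases hL5' : L = 5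
      · -- index 1 = L - 4, so e = b
        have : u[1]? = some e := by rw [show (1:ℕ) = L - 4 by omega]; exact qL4
        rw [q1] at this
        have : b = e := Option.some_inj.mp this
        omega
      · -- L ≥ 6 : Tm4.1 : c ≤ e → b = c + 1
        have := Tm4.1 (by omega)
        omega
    · -- a < b, so b = a + 1
      have hb : b = a + 1 := by rcases W0.1 with h | h <;> omega
      have hca : b = c + 1 := Tm3.2.1 (by omega)
      have he : e = c + 1 := by
        have W1 := hg 1 b c q1 q2
        have T1 := W1.2 e q3
        exact T1.1 (by omega)
      have := Tm4.2.2 a n3 (by omega)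
      omega

lemma W_getElem?_le {n p y : ℕ} (h : (W n)[p]? = some y) : y ≤ n := by
  obtain ⟨hp, hval⟩ := List.getElem?_eq_some_iff.mp h
  exact mem_W_le (hval ▸ List.getElem_mem hp)

lemma W_getElem?_lt {n p y : ℕ} (h : (W n)[p]? = some y)
    (hp : p + 1 < (W n).length) : y < n := by
  obtain ⟨v, hv, hvlt⟩ := W_last n
  have hL : (W n).length = v.length + 1 := by rw [hv]; simp
  rw [hv, List.getElem?_append_left (by omega)] at h
  obtain ⟨hp', hval⟩ := List.getElem?_eq_some_iff.mp h
  exact hvlt y (hval ▸ List.getElem_mem hp')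

lemma infix_getElem? {u w : List ℕ} (h : u <:+: w) :
    ∃ k, ∀ (j x : ℕ), u[j]? = some x → w[k + j]? = some x := by
  obtain ⟨s, t, hst⟩ := h
  refine ⟨s.length, fun j x hx => ?_⟩
  have hj : j < u.length := (List.getElem?_eq_some_iff.mp hx).1
  rw [← hst, List.append_assoc, List.getElem?_append_right (by omega),
    Nat.add_sub_cancel_left, List.getElem?_append_left hj]
  exact hx

lemma pal_factor_classify {i : ℕ} {u : List ℕ} (hne : u ≠ [])
    (hinf : u <:+: W i) (hpal : u.reverse = u) :
    (∃ x, x ≤ i ∧ u = [x]) ∨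
    (∃ x, x % 2 = 0 ∧ 2 ≤ x ∧ x + 1 ≤ i ∧ u = [x, x]) ∨
    (∃ x, x % 2 = 0 ∧ 2 ≤ x ∧ x + 2 ≤ i ∧ u = [x, x+1, x]) ∨
    (∃ x, x % 2 = 0 ∧ 2 ≤ x ∧ x + 2 ≤ i ∧ u = [x+1, x, x+1]) := by
  have hgW := good_W i
  match u, hne with
  | [x], _ =>
    left
    exact ⟨x, mem_W_le (hinf.subset (by simp)), rfl⟩
  | [x, y], _ =>
    right; left
    have hyx : y = x := by simp at hpal; tauto
    subst hyx
    obtain ⟨k, hk⟩ := infix_getElem? hinf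
    have h0 : (W i)[k]? = some y := by
      have := hk 0 y (by rfl); rwa [Nat.add_zero] at this
    have h1 : (W i)[k+1]? = some y := hk 1 y (by rfl)
    have hR := (hgW k y y h0 h1).1
    have hlt : y < i := W_getElem?_lt h0 (List.getElem?_eq_some_iff.mp h1).1
    refine ⟨y, by omega, by omega, by omega, rfl⟩
  | [x, y, z], _ =>
    have hzx : z = x := by simp at hpal; tauto
    obtain ⟨k, hk⟩ := infix_getElem? hinf
    have h0 : (W i)[k]? = some x := by
      have := hk 0 x (by rfl); rwa [Nat.add_zero] at this
    have h1 : (W i)[k+1]? = some y := hk 1 y (by rfl)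
    have h2 : (W i)[k+2]? = some x := by
      have := hk 2 z (by rfl); rwa [hzx] at this
    have h2' : (W i)[(k+1)+1]? = some x := h2
    have G1 := hgW k x y h0 h1
    have G2 := hgW (k+1) y x h1 h2'
    have T := G1.2 x h2
    by_cases hyx : y ≤ x
    · right; right; right
      have hx : x = y + 1 := T.1 hyx
      have hy : y % 2 = 0 ∧ 2 ≤ y := by rcases G1.1 with h | h <;> [omega; tauto]
      have hlt : x < i := W_getElem?_lt h0 (by
        have := (List.getElem?_eq_some_iff.mp h1).1; omega)
      refine ⟨y, hy.1, hy.2, by omega, ?_⟩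
      rw [hzx, hx]
    · right; right; left
      have hy : y = x + 1 := by rcases G1.1 with h | h <;> omega
      have hx : x % 2 = 0 ∧ 2 ≤ x := by rcases G2.1 with h | h <;> [omega; tauto]
      have hlt : y < i := W_getElem?_lt h1 (by
        have := (List.getElem?_eq_some_iff.mp h2).1; omega)
      refine ⟨x, hx.1, hx.2, by omega, ?_⟩
      rw [hzx, hy]
  | (x :: y :: z :: w :: rest), _ =>
    exfalso
    exact no_long_pal (good_infix hgW hinf) hpal (by simp)

lemma map_infix_W {u : List ℕ} {n : ℕ} (h : u <:+: W n) :
    u.map (· + 2) <:+: W (n + 2) := by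
  rw [W_add_two]
  exact (h.map (· + 2)).trans (List.suffix_append _ _).isInfix

lemma pair_infix : ∀ j : ℕ, [2*j+2, 2*j+2] <:+: W (2*j+3) := by
  intro j
  induction j with
  | zero => exact ⟨[0,1], [3], rfl⟩
  | succ j ih =>
    have := map_infix_W ih
    have e : [2*j+2, 2*j+2].map (· + 2) = [2*(j+1)+2, 2*(j+1)+2] := by simp; omega
    rw [e] at this
    rwa [show 2*j+3+2 = 2*(j+1)+3 by ring] at this

lemma triple1_infix : ∀ j : ℕ, [2*j+2, 2*j+3, 2*j+2] <:+: W (2*j+4) := by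
  intro j
  induction j with
  | zero => exact ⟨[0,1,2], [3,4], rfl⟩
  | succ j ih =>
    have := map_infix_W ih
    have e : [2*j+2, 2*j+3, 2*j+2].map (· + 2) =
        [2*(j+1)+2, 2*(j+1)+3, 2*(j+1)+2] := by simp; omega
    rw [e] at this
    rwa [show 2*j+4+2 = 2*(j+1)+4 by ring] at this

lemma triple2_infix : ∀ j : ℕ, [2*j+3, 2*j+2, 2*j+3] <:+: W (2*j+4) := by
  intro j
  induction j with
  | zero => exact ⟨[0,1,2,2], [4], rfl⟩
  | succ j ih =>
    have := map_infix_W ih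
    have e : [2*j+3, 2*j+2, 2*j+3].map (· + 2) =
        [2*(j+1)+3, 2*(j+1)+2, 2*(j+1)+3] := by simp; omega
    rw [e] at this
    rwa [show 2*j+4+2 = 2*(j+1)+4 by ring] at this

def PF (i : ℕ) : Finset (List ℕ) :=
  ((Finset.range (i+1)).image fun j => [j]) ∪
  ((Finset.range ((i-1)/2)).image fun j => [2*j+2, 2*j+2]) ∪
  ((Finset.range ((i-2)/2)).image fun j => [2*j+2, 2*j+3, 2*j+2]) ∪
  ((Finset.range ((i-2)/2)).image fun j => [2*j+3, 2*j+2, 2*j+3])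

lemma PF_card (i : ℕ) :
    (PF i).card = (i + 1) + (i-1)/2 + (i-2)/2 + (i-2)/2 := by
  have c1 : ((Finset.range (i+1)).image fun j : ℕ => [j]).card = i + 1 := by
    rw [Finset.card_image_of_injective _ (fun a b h => by simpa using h),
      Finset.card_range]
  have c2 : ((Finset.range ((i-1)/2)).image fun j : ℕ => [2*j+2, 2*j+2]).card
      = (i-1)/2 := by
    rw [Finset.card_image_of_injective _ (fun a b h => by simp at h; omega),
      Finset.card_range]
  have c3 : ((Finset.range ((i-2)/2)).image fun j : ℕ => [2*j+2, 2*j+3, 2*j+2]).card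
      = (i-2)/2 := by
    rw [Finset.card_image_of_injective _ (fun a b h => by simp at h; omega),
      Finset.card_range]
  have c4 : ((Finset.range ((i-2)/2)).image fun j : ℕ => [2*j+3, 2*j+2, 2*j+3]).card
      = (i-2)/2 := by
    rw [Finset.card_image_of_injective _ (fun a b h => by simp at h; omega),
      Finset.card_range]
  have d1 : Disjoint ((Finset.range (i+1)).image fun j : ℕ => [j])
      ((Finset.range ((i-1)/2)).image fun j : ℕ => [2*j+2, 2*j+2]) := by
    rw [Finset.disjoint_left]
    rintro u hu hv
    simp only [Finset.mem_image, Finset.mem_range] at hu hv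
    obtain ⟨a, -, rfl⟩ := hu
    obtain ⟨b, -, hb⟩ := hv
    simp at hb
  have d2 : Disjoint
      (((Finset.range (i+1)).image fun j : ℕ => [j]) ∪
        ((Finset.range ((i-1)/2)).image fun j : ℕ => [2*j+2, 2*j+2]))
      ((Finset.range ((i-2)/2)).image fun j : ℕ => [2*j+2, 2*j+3, 2*j+2]) := by
    rw [Finset.disjoint_left]
    rintro u hu hv
    simp only [Finset.mem_union, Finset.mem_image, Finset.mem_range] at hu hv
    obtain ⟨b, -, hb⟩ := hv
    rcases hu with ⟨a, -, rfl⟩ | ⟨a, -, rfl⟩ <;> simp at hb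
  have d3 : Disjoint
      ((((Finset.range (i+1)).image fun j : ℕ => [j]) ∪
        ((Finset.range ((i-1)/2)).image fun j : ℕ => [2*j+2, 2*j+2])) ∪
        ((Finset.range ((i-2)/2)).image fun j : ℕ => [2*j+2, 2*j+3, 2*j+2]))
      ((Finset.range ((i-2)/2)).image fun j : ℕ => [2*j+3, 2*j+2, 2*j+3]) := by
    rw [Finset.disjoint_left]
    rintro u hu hv
    simp only [Finset.mem_union, Finset.mem_image, Finset.mem_range] at hu hv
    obtain ⟨b, -, hb⟩ := hv
    rcases hu with (⟨a, -, rfl⟩ | ⟨a, -, rfl⟩) | ⟨a, -, rfl⟩ <;> simp at hb <;> omega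
  rw [PF, Finset.card_union_of_disjoint d3, Finset.card_union_of_disjoint d2,
    Finset.card_union_of_disjoint d1, c1, c2, c3, c4]

lemma pal_set_eq {i : ℕ} (hi : 3 ≤ i) :
    {u : List ℕ | u ≠ [] ∧ u <:+: W i ∧ u.reverse = u} = ↑(PF i) := by
  ext u
  simp only [Set.mem_setOf_eq, Finset.coe_union, Set.mem_union, Finset.coe_image,
    Set.mem_image, Finset.coe_range, Set.mem_Iio, PF, Finset.mem_coe,
    Finset.mem_union, Finset.mem_image, Finset.mem_range]
  constructor
  · rintro ⟨hne, hinf, hpal⟩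
    rcases pal_factor_classify hne hinf hpal with
      ⟨x, hx, rfl⟩ | ⟨x, he, h2, hb, rfl⟩ | ⟨x, he, h2, hb, rfl⟩ | ⟨x, he, h2, hb, rfl⟩
    · exact Or.inl (Or.inl (Or.inl ⟨x, by omega, rfl⟩))
    · refine Or.inl (Or.inl (Or.inr ⟨(x-2)/2, by omega, ?_⟩))
      have : 2*((x-2)/2)+2 = x := by omega
      rw [this]
    · refine Or.inl (Or.inr ⟨(x-2)/2, by omega, ?_⟩)
      have e1 : 2*((x-2)/2)+2 = x := by omega
      have e2 : 2*((x-2)/2)+3 = x+1 := by omega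
      rw [e1, e2]
    · refine Or.inr ⟨(x-2)/2, by omega, ?_⟩
      have e1 : 2*((x-2)/2)+2 = x := by omega
      have e2 : 2*((x-2)/2)+3 = x+1 := by omega
      rw [e1, e2]
  · rintro (((⟨j, hj, rfl⟩ | ⟨j, hj, rfl⟩) | ⟨j, hj, rfl⟩) | ⟨j, hj, rfl⟩)
    · refine ⟨by simp, ?_, by simp⟩
      obtain ⟨s, t, hst⟩ := List.append_of_mem (mem_W (show j ≤ i by omega))
      exact ⟨s, t, by rw [hst]; simp⟩
    · exact ⟨by simp, (pair_infix j).trans (W_prefix (by omega)).isInfix, by simp⟩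
    · exact ⟨by simp, (triple1_infix j).trans (W_prefix (by omega)).isInfix, by simp⟩
    · exact ⟨by simp, (triple2_infix j).trans (W_prefix (by omega)).isInfix, by simp⟩

/-- For all `i ≥ 3`, the number of distinct nonempty palindromic factors of `W i`
equals `⌊5i/2⌋ - 2`. -/
theorem zww_distinct_palindromes : ∀ i : ℕ, 3 ≤ i →
    {u : List ℕ | u ≠ [] ∧ u <:+: W i ∧ u.reverse = u}.ncard = 5 * i / 2 - 2 := by
  intro i hi
  rw [pal_set_eq hi, Set.ncard_coe_finset, PF_card]
  obtain ⟨k, hk | hk⟩ : ∃ k, i = 2*k+3 ∨ i = 2*k+4 := ⟨(i-3)/2, by omega⟩ <;>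
    subst hk <;> omega
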